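/- Let 2 ≤ p ≤ q be real numbers and let u₁,…,uₙ and v₁,…,vₙ be nonnegative real numbers with uᵢ ≥ vᵢ for all i. Then (∑(uᵢ+vᵢ)^p)^(q/p) + (∑(uᵢ−vᵢ)^p)^(q/p) ≥ 2(∑uᵢ^p)^(q/p) + 2^(q-1)(∑vᵢ^p)^(q/p). -/

import Mathlib

open Real Set

lemma superadd {x y s : ℝ} (hx : 0 ≤ x) (hy : 0 ≤ y) (hs : 1 ≤ s) :
    x ^ s + y ^ s ≤ (x + y) ^ s := by
  lift x to NNReal using hx
  lift y to NNReal using hy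
  exact_mod_cast NNReal.add_rpow_le_rpow_add x y hs

lemma tangent {w z r : ℝ} (hw : 0 ≤ w) (hz : 0 ≤ z) (hr : 1 ≤ r) :
    w ^ r + r * w ^ (r - 1) * (z - w) ≤ z ^ r := by
  rcases eq_or_lt_of_le hw with h | hw0
  · rcases eq_or_lt_of_le hr with h1 | h1
    · rw [← h, ← h1]; norm_num
    · rw [← h, Real.zero_rpow (by positivity), Real.zero_rpow (by linarith)]
      simpa using Real.rpow_nonneg hz r
  · have hwne : w ≠ 0 := hw0.ne'
    have hdiv : -1 ≤ z / w - 1 := by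
      have : 0 ≤ z / w := div_nonneg hz hw
      linarith
    have hb := one_add_mul_self_le_rpow_one_add hdiv hr
    rw [add_sub_cancel] at hb
    have hwr : (0:ℝ) < w ^ r := Real.rpow_pos_of_pos hw0 r
    have h2 := mul_le_mul_of_nonneg_left hb hwr.le
    have hzr : w ^ r * (z / w) ^ r = z ^ r := by
      rw [← Real.mul_rpow hw (div_nonneg hz hw)]
      congr 1
      field_simp
    have hw1 : w ^ r = w ^ (r-1) * w := by
      rw [← Real.rpow_add_one hwne (r-1)]; ring_nf
    have hlhs : w ^ r * (1 + r * (z / w - 1)) = w ^ r + r * w ^ (r-1) * (z - w) := by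
      rw [hw1]; field_simp
    rw [hzr, hlhs] at h2
    exact h2

lemma karamata2 {x y p : ℝ} (hy : 0 ≤ y) (hxy : y ≤ x) (hp : 1 ≤ p) :
    x ^ p + (2*y) ^ p ≤ (x + y) ^ p + y ^ p := by
  rcases eq_or_lt_of_le (hy.trans hxy) with hx0 | hx0
  · have hy0 : y = 0 := le_antisymm (hxy.trans hx0.symm.le) hy
    simp [hy0, ← hx0]
  · have hl1 : (0:ℝ) ≤ (x - y)/x := div_nonneg (by linarith) hx0.le
    have hl2 : (0:ℝ) ≤ y/x := div_nonneg hy hx0.le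
    have hsum : (x - y)/x + y/x = 1 := by field_simp; ring
    have hsum2 : y/x + (x - y)/x = 1 := by field_simp; ring
    have m1 : (x + y) ∈ Ici (0:ℝ) := by
      simp only [mem_Ici]; linarith
    have m2 : y ∈ Ici (0:ℝ) := hy
    have c1 := (convexOn_rpow hp).2 m1 m2 hl1 hl2 hsum
    have c2 := (convexOn_rpow hp).2 m1 m2 hl2 hl1 hsum2
    simp only [smul_eq_mul] at c1 c2
    have e1 : (x - y)/x * (x + y) + y/x * y = x := by field_simp; ring
    have e2 : y/x * (x + y) + (x - y)/x * y = 2*y := by field_simp; ring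
    rw [e1] at c1
    rw [e2] at c2
    have hxyp : (0:ℝ) ≤ (x+y)^p := Real.rpow_nonneg (by linarith) p
    have hyp : (0:ℝ) ≤ y^p := Real.rpow_nonneg hy p
    nlinarith [c1, c2]

lemma pointB {x y p : ℝ} (hy : 0 ≤ y) (hxy : y ≤ x) (hp : 1 ≤ p) :
    x ^ p + (2 ^ p - 1) * y ^ p ≤ (x + y) ^ p := by
  have h := karamata2 hy hxy hp
  have h2 : (2*y)^p = 2^p * y^p := Real.mul_rpow (by norm_num) hy
  rw [h2] at h
  linarith

lemma pointC {x y p : ℝ} (hy : 0 ≤ y) (hxy : y ≤ x) (hp : 2 ≤ p) :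
    2 * x ^ p + 2 ^ (p-1) * y ^ p ≤ (x + y) ^ p + (x - y) ^ p := by
  have hx : 0 ≤ x := hy.trans hxy
  have hp0 : (0:ℝ) < p := by linarith
  rcases eq_or_lt_of_le hx with hx0 | hx0
  · have hy0 : y = 0 := le_antisymm (hxy.trans hx0.symm.le) hy
    simp [hy0, ← hx0, Real.zero_rpow hp0.ne']
  · set F : ℝ → ℝ := fun t => (x + t)^p + (x - t)^p - 2^(p-1) * t^p with hF
    have hmono : MonotoneOn F (Icc 0 x) := by
      apply monotoneOn_of_deriv_nonneg (convex_Icc 0 x)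
      · apply ContinuousOn.sub (ContinuousOn.add ?_ ?_) ?_
        · exact ((Real.continuous_rpow_const hp0.le).comp (continuous_const.add continuous_id)).continuousOn
        · exact ((Real.continuous_rpow_const hp0.le).comp (continuous_const.sub continuous_id)).continuousOn
        · exact (continuous_const.mul (Real.continuous_rpow_const hp0.le)).continuousOn
      · rw [interior_Icc]
        intro t ht
        obtain ⟨ht0, htx⟩ := ht
        have d1 : HasDerivAt (fun t : ℝ => (x + t)^p) (p * (x + t)^(p-1)) t := by
          have h0 : HasDerivAt (fun t : ℝ => x + t) 1 t := (hasDerivAt_id t).const_add x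
          have := h0.rpow_const (p := p) (Or.inl (by positivity))
          simpa using this
        have d2 : HasDerivAt (fun t : ℝ => (x - t)^p) (-(p * (x - t)^(p-1))) t := by
          have h0 : HasDerivAt (fun t : ℝ => x - t) (-1) t := (hasDerivAt_id t).const_sub x
          have := h0.rpow_const (p := p) (Or.inl (by intro h; nlinarith [h]))
          convert this using 1
          ring
        have d3 : HasDerivAt (fun t : ℝ => 2^(p-1) * t^p) (2^(p-1) * (p * t^(p-1))) t := by
          exact (Real.hasDerivAt_rpow_const (p := p) (Or.inl ht0.ne')).const_mul _
        have dF : HasDerivAt F (p * (x + t)^(p-1) + -(p * (x - t)^(p-1)) - 2^(p-1) * (p * t^(p-1))) t :=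
          (d1.add d2).sub d3
        exact (dF.differentiableAt).differentiableWithinAt
      · rw [interior_Icc]
        intro t ht
        obtain ⟨ht0, htx⟩ := ht
        have d1 : HasDerivAt (fun t : ℝ => (x + t)^p) (p * (x + t)^(p-1)) t := by
          have h0 : HasDerivAt (fun t : ℝ => x + t) 1 t := (hasDerivAt_id t).const_add x
          have := h0.rpow_const (p := p) (Or.inl (by positivity))
          simpa using this
        have d2 : HasDerivAt (fun t : ℝ => (x - t)^p) (-(p * (x - t)^(p-1))) t := by
          have h0 : HasDerivAt (fun t : ℝ => x - t) (-1) t := (hasDerivAt_id t).const_sub x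
          have := h0.rpow_const (p := p) (Or.inl (by intro h; nlinarith [h]))
          convert this using 1
          ring
        have d3 : HasDerivAt (fun t : ℝ => 2^(p-1) * t^p) (2^(p-1) * (p * t^(p-1))) t := by
          exact (Real.hasDerivAt_rpow_const (p := p) (Or.inl ht0.ne')).const_mul _
        have dF : HasDerivAt F (p * (x + t)^(p-1) + -(p * (x - t)^(p-1)) - 2^(p-1) * (p * t^(p-1))) t :=
          (d1.add d2).sub d3
        rw [dF.deriv]
        have key : (x - t)^(p-1) + (2*t)^(p-1) ≤ (x + t)^(p-1) := by
          have := superadd (x := x - t) (y := 2*t) (s := p - 1)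
            (by linarith) (by linarith) (by linarith)
          convert this using 2
          ring
        have h2t : (2*t)^(p-1) = 2^(p-1) * t^(p-1) := Real.mul_rpow (by norm_num) ht0.le
        rw [h2t] at key
        nlinarith [key, hp0]
    have hmem0 : (0:ℝ) ∈ Icc (0:ℝ) x := ⟨le_refl 0, hx0.le⟩
    have hmemy : y ∈ Icc (0:ℝ) x := ⟨hy, hxy⟩
    have := hmono hmem0 hmemy hy
    simp only [hF] at this
    rw [Real.zero_rpow hp0.ne'] at this
    simp at this
    linarith

lemma T1 {σ τ c r : ℝ} (hτ : 0 ≤ τ) (hc : 2 ≤ c) (hr : 1 ≤ r)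
    (hστ : (c-1)*τ ≤ σ) :
    2*σ^r + 2^(r-1)*c^r*τ^r ≤ (σ+(2*c-1)*τ)^r + (σ-(c-1)*τ)^r := by
  have hr0 : (0:ℝ) < r := by linarith
  have hσ0 : 0 ≤ σ := le_trans (mul_nonneg (by linarith) hτ) hστ
  rcases eq_or_lt_of_le hτ with hτ0 | hτ0
  · subst hτ0
    simp only [mul_zero, add_zero, sub_zero, Real.zero_rpow hr0.ne']
    linarith [Real.rpow_nonneg hσ0 r]
  · have hσpos : (0:ℝ) < σ := lt_of_lt_of_le (by nlinarith) hστ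
    set b := σ/(c-1) with hb
    have hc1 : (0:ℝ) < c - 1 := by linarith
    have hbpos : 0 < b := div_pos hσpos hc1
    set G : ℝ → ℝ := fun t => (σ+(2*c-1)*t)^r + (σ-(c-1)*t)^r - 2^(r-1)*c^r*t^r with hG
    have derivG : ∀ t ∈ Ioo (0:ℝ) b, HasDerivAt G
        ((2*c-1) * r * (σ+(2*c-1)*t)^(r-1) + (-(c-1)) * r * (σ-(c-1)*t)^(r-1)
          - 2^(r-1)*c^r * (r * t^(r-1))) t := by
      intro t ht
      obtain ⟨ht0, htb⟩ := ht
      have hX : 0 < σ + (2*c-1)*t := by nlinarith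
      have hY : 0 < σ - (c-1)*t := by
        have : (c-1)*t < σ := by
          rw [hb] at htb
          calc (c-1)*t < (c-1)*b := by nlinarith
          _ = σ := by rw [hb]; field_simp
        linarith
      have d1 : HasDerivAt (fun t : ℝ => (σ+(2*c-1)*t)^r) ((2*c-1) * r * (σ+(2*c-1)*t)^(r-1)) t := by
        have h0 : HasDerivAt (fun t : ℝ => σ + (2*c-1)*t) (2*c-1) t := by
          simpa using ((hasDerivAt_id t).const_mul (2*c-1)).const_add σ
        have := h0.rpow_const (p := r) (Or.inl hX.ne')
        convert this using 1 <;> ring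
      have d2 : HasDerivAt (fun t : ℝ => (σ-(c-1)*t)^r) ((-(c-1)) * r * (σ-(c-1)*t)^(r-1)) t := by
        have h0 : HasDerivAt (fun t : ℝ => σ - (c-1)*t) (-(c-1)) t := by
          simpa using ((hasDerivAt_id t).const_mul (c-1)).const_sub σ
        have := h0.rpow_const (p := r) (Or.inl hY.ne')
        convert this using 1 <;> ring
      have d3 : HasDerivAt (fun t : ℝ => 2^(r-1)*c^r*t^r) (2^(r-1)*c^r * (r * t^(r-1))) t :=
        (Real.hasDerivAt_rpow_const (p := r) (Or.inl ht0.ne')).const_mul _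
      exact (d1.add d2).sub d3
    have hmono : MonotoneOn G (Icc 0 b) := by
      apply monotoneOn_of_deriv_nonneg (convex_Icc 0 b)
      · apply ContinuousOn.sub (ContinuousOn.add ?_ ?_) ?_
        · exact ((Real.continuous_rpow_const hr0.le).comp
            (continuous_const.add (continuous_const.mul continuous_id))).continuousOn
        · exact ((Real.continuous_rpow_const hr0.le).comp
            (continuous_const.sub (continuous_const.mul continuous_id))).continuousOn
        · exact (continuous_const.mul (Real.continuous_rpow_const hr0.le)).continuousOn
      · rw [interior_Icc]
        intro t ht
        exact ((derivG t ht).differentiableAt).differentiableWithinAt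
      · rw [interior_Icc]
        intro t ht
        rw [(derivG t ht).deriv]
        obtain ⟨ht0, htb⟩ := ht
        have htσ : t ≤ σ := by
          have : b ≤ σ := by
            rw [hb]
            exact div_le_self hσ0 (by linarith)
          linarith
        have hX : 0 < σ + (2*c-1)*t := by nlinarith
        have hY : 0 ≤ σ - (c-1)*t := by
          have : (c-1)*t ≤ (c-1)*b := by nlinarith
          have h2 : (c-1)*b = σ := by rw [hb]; field_simp
          linarith
        have hYX : σ - (c-1)*t ≤ σ + (2*c-1)*t := by nlinarith
        have k1 : (σ-(c-1)*t)^(r-1) ≤ (σ+(2*c-1)*t)^(r-1) :=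
          Real.rpow_le_rpow hY hYX (by linarith)
        have h2ct : 2*c*t ≤ σ + (2*c-1)*t := by nlinarith
        have k2 : (2*c*t)^(r-1) ≤ (σ+(2*c-1)*t)^(r-1) :=
          Real.rpow_le_rpow (by nlinarith) h2ct (by linarith)
        have e2 : (2*c*t)^(r-1) = 2^(r-1) * c^(r-1) * t^(r-1) := by
          rw [mul_assoc, Real.mul_rpow (by norm_num) (by nlinarith),
            Real.mul_rpow (by linarith) ht0.le]
          ring
        have ecr : c^r = c^(r-1) * c := by
          rw [← Real.rpow_add_one (by linarith : (0:ℝ) < c).ne' (r-1)]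
          ring_nf
        have k3 : 2^(r-1)*c^r * t^(r-1) ≤ c * (σ+(2*c-1)*t)^(r-1) := by
          calc 2^(r-1)*c^r * t^(r-1) = c * (2^(r-1) * c^(r-1) * t^(r-1)) := by rw [ecr]; ring
          _ = c * (2*c*t)^(r-1) := by rw [e2]
          _ ≤ c * (σ+(2*c-1)*t)^(r-1) := by
              apply mul_le_mul_of_nonneg_left k2 (by linarith)
        have k4 : (c-1) * (σ-(c-1)*t)^(r-1) ≤ (c-1) * (σ+(2*c-1)*t)^(r-1) :=
          mul_le_mul_of_nonneg_left k1 (by linarith)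
        nlinarith [k3, k4, hr0]
    have hmem0 : (0:ℝ) ∈ Icc (0:ℝ) b := ⟨le_refl 0, hbpos.le⟩
    have hmemτ : τ ∈ Icc (0:ℝ) b := by
      constructor
      · exact hτ
      · rw [hb, le_div_iff₀ hc1]; linarith
    have := hmono hmem0 hmemτ hτ
    simp only [hG] at this
    rw [Real.zero_rpow hr0.ne'] at this
    simp at this
    linarith

lemma T2 {σ τ c r : ℝ} (hτ : 0 ≤ τ) (hc : 2 ≤ c) (hr : 1 ≤ r)
    (hτσ : τ ≤ σ) (hστ : σ ≤ (c-1)*τ) :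
    2*σ^r + 2^(r-1)*c^r*τ^r ≤ (σ+(2*c-1)*τ)^r := by
  have hr0 : (0:ℝ) < r := by linarith
  have hσ0 : 0 ≤ σ := hτ.trans hτσ
  have hc1 : (0:ℝ) < c - 1 := by linarith
  rcases eq_or_lt_of_le hσ0 with hσe | hσpos
  · have hτe : τ = 0 := le_antisymm (hτσ.trans hσe.symm.le) hτ
    simp only [← hσe, hτe, mul_zero, add_zero, zero_add, Real.zero_rpow hr0.ne']
    norm_num
  · have hτpos : 0 < τ := by nlinarith
    set b := σ/(c-1) with hb
    have hbpos : 0 < b := div_pos hσpos hc1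
    have hbσ : b ≤ σ := div_le_self hσ0 (by linarith)
    have hcbσ : (c-1)*b = σ := by rw [hb]; field_simp
    set G : ℝ → ℝ := fun t => (σ+(2*c-1)*t)^r - 2^(r-1)*c^r*t^r with hG
    have derivG : ∀ t ∈ Ioo b σ, HasDerivAt G
        ((2*c-1) * r * (σ+(2*c-1)*t)^(r-1) - 2^(r-1)*c^r * (r * t^(r-1))) t := by
      intro t ht
      obtain ⟨htb, htσ⟩ := ht
      have ht0 : 0 < t := hbpos.trans htb
      have hX : 0 < σ + (2*c-1)*t := by nlinarith
      have d1 : HasDerivAt (fun t : ℝ => (σ+(2*c-1)*t)^r) ((2*c-1) * r * (σ+(2*c-1)*t)^(r-1)) t := by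
        have h0 : HasDerivAt (fun t : ℝ => σ + (2*c-1)*t) (2*c-1) t := by
          simpa using ((hasDerivAt_id t).const_mul (2*c-1)).const_add σ
        have := h0.rpow_const (p := r) (Or.inl hX.ne')
        convert this using 1
      have d3 : HasDerivAt (fun t : ℝ => 2^(r-1)*c^r*t^r) (2^(r-1)*c^r * (r * t^(r-1))) t :=
        (Real.hasDerivAt_rpow_const (p := r) (Or.inl ht0.ne')).const_mul _
      exact d1.sub d3
    have hmono : MonotoneOn G (Icc b σ) := by
      apply monotoneOn_of_deriv_nonneg (convex_Icc b σ)
      · apply ContinuousOn.sub ?_ ?_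
        · exact ((Real.continuous_rpow_const hr0.le).comp
            (continuous_const.add (continuous_const.mul continuous_id))).continuousOn
        · exact (continuous_const.mul (Real.continuous_rpow_const hr0.le)).continuousOn
      · rw [interior_Icc]
        intro t ht
        exact ((derivG t ht).differentiableAt).differentiableWithinAt
      · rw [interior_Icc]
        intro t ht
        rw [(derivG t ht).deriv]
        obtain ⟨htb, htσ⟩ := ht
        have ht0 : 0 < t := hbpos.trans htb
        have h2ct : 2*c*t ≤ σ + (2*c-1)*t := by nlinarith
        have k2 : (2*c*t)^(r-1) ≤ (σ+(2*c-1)*t)^(r-1) :=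
          Real.rpow_le_rpow (by nlinarith) h2ct (by linarith)
        have e2 : (2*c*t)^(r-1) = 2^(r-1) * c^(r-1) * t^(r-1) := by
          rw [mul_assoc, Real.mul_rpow (by norm_num) (by nlinarith),
            Real.mul_rpow (by linarith) ht0.le]
          ring
        have ecr : c^r = c^(r-1) * c := by
          rw [← Real.rpow_add_one (by linarith : (0:ℝ) < c).ne' (r-1)]
          ring_nf
        have hXpow : 0 ≤ (σ+(2*c-1)*t)^(r-1) := Real.rpow_nonneg (by nlinarith) _
        have k3 : 2^(r-1)*c^r * t^(r-1) ≤ c * (σ+(2*c-1)*t)^(r-1) := by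
          calc 2^(r-1)*c^r * t^(r-1) = c * (2^(r-1) * c^(r-1) * t^(r-1)) := by rw [ecr]; ring
          _ = c * (2*c*t)^(r-1) := by rw [e2]
          _ ≤ c * (σ+(2*c-1)*t)^(r-1) := by
              apply mul_le_mul_of_nonneg_left k2 (by linarith)
        have k5 := mul_le_mul_of_nonneg_left k3 hr0.le
        nlinarith [k5, mul_nonneg hr0.le hXpow]
    have hmemb : b ∈ Icc b σ := ⟨le_refl b, hbσ⟩
    have hmemτ : τ ∈ Icc b σ := by
      constructor
      · rw [hb, div_le_iff₀ hc1]; linarith [hστ]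
      · exact hτσ
    have hbτ : b ≤ τ := by rw [hb, div_le_iff₀ hc1]; linarith [hστ]
    have hmm := hmono hmemb hmemτ hbτ
    have ht1 := T1 (σ := σ) (τ := b) (c := c) (r := r) hbpos.le hc hr (le_of_eq hcbσ)
    have hz : σ - (c-1)*b = 0 := by rw [hcbσ]; ring
    rw [hz, Real.zero_rpow hr0.ne'] at ht1
    simp only [hG] at hmm
    linarith

lemma lemD {α β σ τ c r : ℝ} (hr : 1 ≤ r) (hc : 2 ≤ c) (hτ : 0 ≤ τ) (hτσ : τ ≤ σ)
    (hβ : 0 ≤ β) (hα : σ + (2*c-1)*τ ≤ α) (hsum : 2*σ + c*τ ≤ α + β) :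
    2*σ^r + 2^(r-1)*c^r*τ^r ≤ α^r + β^r := by
  have hσ0 : 0 ≤ σ := hτ.trans hτσ
  have hr0 : (0:ℝ) ≤ r := by linarith
  by_cases hcase : (c-1)*τ ≤ σ
  · set x := σ+(2*c-1)*τ with hx
    set y := σ-(c-1)*τ with hy
    have hx0 : 0 ≤ x := by rw [hx]; nlinarith
    have hy0 : 0 ≤ y := by rw [hy]; linarith
    have hyx : y ≤ x := by rw [hx, hy]; nlinarith
    have hα0 : 0 ≤ α := hx0.trans hα
    have t1 := T1 hτ hc hr hcase
    have tα := tangent hx0 hα0 hr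
    have tβ := tangent hy0 hβ hr
    have hpow : y^(r-1) ≤ x^(r-1) := Real.rpow_le_rpow hy0 hyx (by linarith)
    have hypow : 0 ≤ y^(r-1) := Real.rpow_nonneg hy0 _
    have hxy_sum : x + y = 2*σ + c*τ := by rw [hx, hy]; ring
    have h1 : 0 ≤ r * y^(r-1) * ((α - x) + (β - y)) := by
      apply mul_nonneg (mul_nonneg hr0 hypow)
      linarith [hsum, hxy_sum]
    have h2 : 0 ≤ r * (x^(r-1) - y^(r-1)) * (α - x) := by
      apply mul_nonneg (mul_nonneg hr0 (by linarith))
      linarith [hα]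
    have hkey : 0 ≤ r * x^(r-1) * (α - x) + r * y^(r-1) * (β - y) := by
      have : r * x^(r-1) * (α - x) + r * y^(r-1) * (β - y)
          = r * y^(r-1) * ((α - x) + (β - y)) + r * (x^(r-1) - y^(r-1)) * (α - x) := by ring
      rw [this]
      linarith
    linarith [t1, tα, tβ, hkey]
  · push_neg at hcase
    have t2 := T2 hτ hc hr hτσ hcase.le
    have hx0 : (0:ℝ) ≤ σ+(2*c-1)*τ := by nlinarith
    have hαpow : (σ+(2*c-1)*τ)^r ≤ α^r := Real.rpow_le_rpow hx0 hα hr0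
    have hβpow : 0 ≤ β^r := Real.rpow_nonneg hβ _
    linarith

theorem stmt3 (n : ℕ) (hn : 0 < n) (p q : ℝ) (hp : 2 ≤ p) (hpq : p ≤ q)
    (u v : Fin n → ℝ) (hv : ∀ i, 0 ≤ v i) (huv : ∀ i, v i ≤ u i) :
    (∑ i, (u i + v i) ^ p) ^ (q / p) + (∑ i, (u i - v i) ^ p) ^ (q / p) ≥
      2 * (∑ i, u i ^ p) ^ (q / p) + 2 ^ (q - 1) * (∑ i, v i ^ p) ^ (q / p) := by
  have hp0 : (0:ℝ) < p := by linarith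
  have hp1 : (1:ℝ) ≤ p := by linarith
  have hr : (1:ℝ) ≤ q / p := (one_le_div hp0).2 hpq
  set c : ℝ := 2^(p-1) with hcdef
  have hc : (2:ℝ) ≤ c := by
    calc (2:ℝ) = 2^(1:ℝ) := (Real.rpow_one 2).symm
    _ ≤ 2^(p-1) := Real.rpow_le_rpow_of_exponent_le one_le_two (by linarith)
  have h2c : 2*c = 2^p := by
    rw [hcdef, show p = 1 + (p-1) by ring]
    rw [Real.rpow_add two_pos, Real.rpow_one]
    ring_nf
  set σ := ∑ i, u i ^ p with hσdef
  set τ := ∑ i, v i ^ p with hτdef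
  set α := ∑ i, (u i + v i) ^ p with hαdef
  set β := ∑ i, (u i - v i) ^ p with hβdef
  have hu : ∀ i, 0 ≤ u i := fun i => (hv i).trans (huv i)
  have hτ0 : 0 ≤ τ := Finset.sum_nonneg fun i _ => Real.rpow_nonneg (hv i) p
  have hτσ : τ ≤ σ := Finset.sum_le_sum fun i _ => Real.rpow_le_rpow (hv i) (huv i) hp0.le
  have hβ0 : 0 ≤ β := Finset.sum_nonneg fun i _ =>
    Real.rpow_nonneg (by linarith [huv i]) p
  have hA : σ + (2*c-1)*τ ≤ α := by
    have he : σ + (2*c-1)*τ = ∑ i, (u i ^ p + (2^p - 1) * v i ^ p) := by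
      rw [Finset.sum_add_distrib, ← Finset.mul_sum, h2c]
    rw [he, hαdef]
    exact Finset.sum_le_sum fun i _ => pointB (hv i) (huv i) hp1
  have hS : 2*σ + c*τ ≤ α + β := by
    have he : 2*σ + c*τ = ∑ i, (2 * u i ^ p + 2^(p-1) * v i ^ p) := by
      rw [Finset.sum_add_distrib, ← Finset.mul_sum, ← Finset.mul_sum, hcdef]
    rw [he, hαdef, hβdef, ← Finset.sum_add_distrib]
    exact Finset.sum_le_sum fun i _ => pointC (hv i) (huv i) hp
  have main := lemD hr hc hτ0 hτσ hβ0 hA hS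
  have hconv : (2:ℝ)^(q/p-1) * c^(q/p) = 2^(q-1) := by
    rw [hcdef, ← Real.rpow_mul (by norm_num : (0:ℝ) ≤ 2), ← Real.rpow_add two_pos]
    congr 1
    field_simp
    ring
  rw [ge_iff_le, ← hconv]
  linarith [main]
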